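/- arXiv:1305.4314 — 2 statements merged into one kernel-verified Lean document; each statement's English description precedes it below -/
import Mathlib

section
/- Let W^n = (W_1,…,W_n) be random variables each taking values in a finite alphabet 𝒲 with ‖P_{W^n} − ∏_{t=1}^n Q_W‖_TV = ε for some pmf Q_W and ε ∈ (0,1/4), and let T be uniformly distributed on [n] independent of W^n. Then I(W_T ; T) ≤ g(ε), where g(ε) = 4ε·log(|𝒲|/ε). In the paper's application W_t = (X_t,Y_t,Z_t), so I(X_T,Y_T,Z_T ; T) is bounded by g(ε) with g(ε) = 4ε·log(|𝒳||𝒴||𝒵|/ε). -/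
open scoped BigOperators
open Finset Filter

noncomputable section

/-- `p` is a probability mass function on the finite type `α`. -/
def IsPmf {α : Type} [Fintype α] (p : α → ℝ) : Prop :=
  (∀ a, 0 ≤ p a) ∧ ∑ a, p a = 1

/-- Total variation distance `‖p − q‖_TV = (1/2) Σ |p − q|`. -/
def TV {α : Type} [Fintype α] (p q : α → ℝ) : ℝ :=
  (∑ a, |p a - q a|) / 2

/-- The distribution (law) of the random variable `f` when the underlying
probability mass function is `p`. -/
def lawOf {Ω α : Type} [Fintype Ω] [DecidableEq α]
    (p : Ω → ℝ) (f : Ω → α) : α → ℝ :=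
  fun a => ∑ ω, if f ω = a then p ω else 0

/-- Shannon entropy (base 2) of a pmf on a finite type. -/
def H2 {α : Type} [Fintype α] (p : α → ℝ) : ℝ :=
  -∑ a, p a * Real.logb 2 (p a)

/-- Entropy `H(X)` of a random variable `X` under the pmf `p`. -/
def ent {Ω α : Type} [Fintype Ω] [Fintype α] [DecidableEq α]
    (p : Ω → ℝ) (X : Ω → α) : ℝ :=
  H2 (lawOf p X)

/-- Mutual information `I(X;Y)` under the pmf `p`. -/
def mi {Ω α β : Type} [Fintype Ω] [Fintype α] [Fintype β]
    [DecidableEq α] [DecidableEq β]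
    (p : Ω → ℝ) (X : Ω → α) (Y : Ω → β) : ℝ :=
  ent p X + ent p Y - ent p (fun ω => (X ω, Y ω))

/-- Conditional mutual information `I(X;Y|W)` under the pmf `p`. -/
def cmi {Ω α β γ : Type} [Fintype Ω] [Fintype α] [Fintype β] [Fintype γ]
    [DecidableEq α] [DecidableEq β] [DecidableEq γ]
    (p : Ω → ℝ) (X : Ω → α) (Y : Ω → β) (W : Ω → γ) : ℝ :=
  ent p (fun ω => (X ω, W ω)) + ent p (fun ω => (Y ω, W ω))
    - ent p (fun ω => (X ω, Y ω, W ω)) - ent p W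

/-- `X` and `Y` are conditionally independent given `W` under `p`
(the Markov chain `X − W − Y`). -/
def CondIndep {Ω α β γ : Type} [Fintype Ω] [Fintype α] [Fintype β] [Fintype γ]
    [DecidableEq α] [DecidableEq β] [DecidableEq γ]
    (p : Ω → ℝ) (X : Ω → α) (Y : Ω → β) (W : Ω → γ) : Prop :=
  ∀ x y w,
    lawOf p (fun ω => (X ω, Y ω, W ω)) (x, y, w) * lawOf p W w
      = lawOf p (fun ω => (X ω, W ω)) (x, w) * lawOf p (fun ω => (Y ω, W ω)) (y, w)

/-- `X` and `Y` are independent under `p`. -/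
def IndepRV {Ω α β : Type} [Fintype Ω] [Fintype α] [Fintype β]
    [DecidableEq α] [DecidableEq β]
    (p : Ω → ℝ) (X : Ω → α) (Y : Ω → β) : Prop :=
  ∀ a b, lawOf p (fun ω => (X ω, Y ω)) (a, b) = lawOf p X a * lawOf p Y b



namespace CuffAux

/-- `-u log u ≤ 1/e` for `u ≥ 0`. -/
lemma negMulLog_le_inv_e {u : ℝ} (hu : 0 ≤ u) : Real.negMulLog u ≤ (Real.exp 1)⁻¹ := by
  rcases eq_or_lt_of_le hu with h | h
  · simp [← h]
    positivity
  · have he : (0:ℝ) < Real.exp 1 := Real.exp_pos 1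
    have h1 : Real.log ((Real.exp 1 * u)⁻¹) ≤ (Real.exp 1 * u)⁻¹ - 1 :=
      Real.log_le_sub_one_of_pos (by positivity)
    rw [Real.log_inv, Real.log_mul (by positivity) h.ne', Real.log_exp] at h1
    -- h1 : -(1 + log u) ≤ (e*u)⁻¹ - 1
    have h2 : -Real.log u ≤ (Real.exp 1 * u)⁻¹ := by linarith
    have h3 : u * (Real.exp 1 * u)⁻¹ = (Real.exp 1)⁻¹ := by
      field_simp
    have := mul_le_mul_of_nonneg_left h2 hu
    rw [Real.negMulLog, neg_mul, ← mul_neg] at *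
    calc u * (-Real.log u) ≤ u * (Real.exp 1 * u)⁻¹ := this
      _ = (Real.exp 1)⁻¹ := h3

/-- Subadditivity of `negMulLog`. -/
lemma negMulLog_add_le {y d : ℝ} (hy : 0 ≤ y) (hd : 0 ≤ d) :
    Real.negMulLog (y + d) ≤ Real.negMulLog y + Real.negMulLog d := by
  have key : ∀ a b : ℝ, 0 ≤ a → 0 ≤ b → -a * Real.log (a + b) ≤ Real.negMulLog a := by
    intro a b ha hb
    rcases eq_or_lt_of_le ha with h | h
    · simp [← h, Real.negMulLog]
    · have hlog := Real.log_le_log h (by linarith : a ≤ a + b)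
      rw [Real.negMulLog, neg_mul, neg_mul]
      nlinarith
  have h1 := key y d hy hd
  have h2 := key d y hd hy
  have expand : Real.negMulLog (y + d) = -y * Real.log (y + d) + -d * Real.log (d + y) := by
    rw [add_comm d y, Real.negMulLog]; ring
  rw [expand]
  exact add_le_add h1 h2

/-- Reverse direction: `negMulLog y - negMulLog (y+d) ≤ d` for `y+d ≤ 1`. -/
lemma negMulLog_rev_le {y d : ℝ} (hy : 0 ≤ y) (hd : 0 ≤ d) (hx : y + d ≤ 1) :
    Real.negMulLog y - Real.negMulLog (y + d) ≤ d := by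
  rcases eq_or_lt_of_le hy with h | h
  · subst h
    have hlog : Real.log d ≤ 0 := by
      rcases eq_or_lt_of_le hd with h2 | h2
      · simp [← h2]
      · exact Real.log_nonpos (by linarith) (by linarith)
    simp [Real.negMulLog]
    nlinarith
  · have hlog : Real.log (y + d) - Real.log y ≤ d / y := by
      have h0 := Real.log_le_sub_one_of_pos (show 0 < (y + d) / y by positivity)
      rw [Real.log_div (by linarith) h.ne'] at h0
      have : (y + d) / y - 1 = d / y := by field_simp; ring
      linarith
    have hA : y * (Real.log (y + d) - Real.log y) ≤ d := by
      have := mul_le_mul_of_nonneg_left hlog (le_of_lt h)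
      rwa [mul_div_cancel₀ d h.ne'] at this
    have hB : d * Real.log (y + d) ≤ 0 :=
      mul_nonpos_of_nonneg_of_nonpos hd (Real.log_nonpos (by linarith) hx)
    have expand : Real.negMulLog y - Real.negMulLog (y + d)
        = y * (Real.log (y + d) - Real.log y) + d * Real.log (y + d) := by
      rw [Real.negMulLog, Real.negMulLog]; ring
    linarith [expand.le, expand.ge]

/-- one-sided version for ordered pair -/
lemma abs_negMulLog_sub_le' {y d : ℝ} (hy : 0 ≤ y) (hd : 0 ≤ d) (hx : y + d ≤ 1)
    (hd2 : d ≤ 1 / 2) :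
    |Real.negMulLog (y + d) - Real.negMulLog y|
      ≤ Real.negMulLog d + (1 - Real.log 2) * d := by
  have hc : Real.log 2 ≤ 1 := by
    nlinarith [Real.log_two_gt_d9, Real.log_two_lt_d9]
  have hkey : d * Real.log 2 ≤ Real.negMulLog d := by
    rcases eq_or_lt_of_le hd with h | h
    · simp [← h]
    · have : Real.log d ≤ Real.log (1 / 2) := Real.log_le_log h hd2
      rw [Real.log_div one_ne_zero two_ne_zero, Real.log_one] at this
      rw [Real.negMulLog, neg_mul]
      nlinarith
  rw [abs_le]
  constructor
  · have h1 := negMulLog_rev_le hy hd hx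
    nlinarith
  · have h1 := negMulLog_add_le hy hd
    have h2 : 0 ≤ (1 - Real.log 2) * d := by nlinarith
    linarith

lemma abs_negMulLog_sub_le {x y : ℝ} (hx0 : 0 ≤ x) (hx1 : x ≤ 1) (hy0 : 0 ≤ y)
    (hy1 : y ≤ 1) (hd2 : |x - y| ≤ 1 / 2) :
    |Real.negMulLog x - Real.negMulLog y|
      ≤ Real.negMulLog |x - y| + (1 - Real.log 2) * |x - y| := by
  rcases le_total y x with h | h
  · have hd : 0 ≤ x - y := by linarith
    have habs : |x - y| = x - y := abs_of_nonneg hd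
    rw [habs] at hd2 ⊢
    have := abs_negMulLog_sub_le' hy0 hd (by linarith) hd2
    rw [show y + (x - y) = x by ring] at this
    exact this
  · have hd : 0 ≤ y - x := by linarith
    have habs : |x - y| = y - x := by rw [abs_sub_comm]; exact abs_of_nonneg hd
    rw [habs] at hd2 ⊢
    have := abs_negMulLog_sub_le' hx0 hd (by linarith) hd2
    rw [show x + (y - x) = y by ring, abs_sub_comm] at this
    exact this

/-- Gibbs-type bound: `∑ negMulLog (d a) ≤ m log (k/m)` where `m = ∑ d a`. -/
lemma sum_negMulLog_le {α : Type} [Fintype α] [Nonempty α] (d : α → ℝ)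
    (hd : ∀ a, 0 ≤ d a) {m : ℝ} (hm : ∑ a, d a = m) :
    ∑ a, Real.negMulLog (d a) ≤ m * Real.log ((Fintype.card α : ℝ) / m) := by
  have hm0 : 0 ≤ m := hm ▸ Finset.sum_nonneg fun a _ => hd a
  rcases eq_or_lt_of_le hm0 with h | h
  · -- m = 0, all d a = 0
    have hall : ∀ a ∈ Finset.univ, d a = 0 := by
      intro a _
      have := (Finset.sum_eq_zero_iff_of_nonneg (fun a _ => hd a)).mp (hm.trans h.symm)
      exact this a (mem_univ a)
    have : ∑ a, Real.negMulLog (d a) = 0 := by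
      apply Finset.sum_eq_zero
      intro a ha
      rw [hall a ha, Real.negMulLog_zero]
    rw [this, ← h]
    simp
  · have hk : (0:ℝ) < (Fintype.card α : ℝ) := by
      exact_mod_cast Fintype.card_pos
    set k : ℝ := (Fintype.card α : ℝ) with hkdef
    have key : ∀ a, Real.negMulLog (d a)
        ≤ d a * Real.log (k / m) + (m / k - d a) := by
      intro a
      rcases eq_or_lt_of_le (hd a) with h0 | h0
      · rw [← h0]
        simp
        positivity
      · have hlog : Real.log ((m / k) / d a) ≤ (m / k) / d a - 1 :=
          Real.log_le_sub_one_of_pos (by positivity)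
        rw [Real.log_div (by positivity) h0.ne', Real.log_div h.ne' hk.ne'] at hlog
        have hmul := mul_le_mul_of_nonneg_left hlog (hd a)
        have hcan : d a * ((m / k) / d a - 1) = m / k - d a := by
          field_simp
        rw [hcan] at hmul
        have hlogkm : Real.log (k / m) = Real.log k - Real.log m :=
          Real.log_div hk.ne' h.ne'
        rw [Real.negMulLog, neg_mul, hlogkm]
        nlinarith
    calc ∑ a, Real.negMulLog (d a)
        ≤ ∑ a, (d a * Real.log (k / m) + (m / k - d a)) :=
          Finset.sum_le_sum fun a _ => key a
      _ = m * Real.log (k / m) := by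
          rw [Finset.sum_add_distrib, ← Finset.sum_mul, hm, Finset.sum_sub_distrib,
            Finset.sum_const, hm, Finset.card_univ]
          have : (Fintype.card α) • (m / k) = m := by
            rw [nsmul_eq_mul, ← hkdef]
            field_simp
          rw [this]
          ring

lemma e_num : (Real.exp 1)⁻¹ + 1 ≤ 2 * Real.log 2 := by
  have h1 := Real.exp_one_gt_d9
  have h2 := Real.log_two_gt_d9
  have h3 : Real.exp 1 * (Real.exp 1)⁻¹ = 1 := mul_inv_cancel₀ (Real.exp_pos 1).ne'
  have h4 : 0 < (Real.exp 1)⁻¹ := by positivity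
  nlinarith

lemma key_numeric {m ε k : ℝ} (hm0 : 0 ≤ m) (hmε : m ≤ 2 * ε) (hε : 0 < ε)
    (hε4 : ε < 1 / 4) (hk : 1 ≤ k) :
    m * Real.log (k / m) + (1 - Real.log 2) * m ≤ 2 * ε * Real.log (k / ε) := by
  have hlogk : 0 ≤ Real.log k := Real.log_nonneg hk
  have hlogε : Real.log ε < 0 := Real.log_neg hε (by linarith)
  have hlogkε : Real.log (k / ε) = Real.log k - Real.log ε :=
    Real.log_div (by linarith) hε.ne'
  rcases eq_or_lt_of_le hm0 with h | h
  · rw [← h]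
    rw [hlogkε]
    nlinarith
  · have h2ε : (0:ℝ) < 2 * ε := by linarith
    have hu := negMulLog_le_inv_e (show (0:ℝ) ≤ m / (2 * ε) by positivity)
    have hA : -(m * Real.log m)
        = m * (-Real.log (2 * ε)) + (2 * ε) * Real.negMulLog (m / (2 * ε)) := by
      rw [Real.negMulLog, Real.log_div h.ne' h2ε.ne']
      field_simp
      ring
    have hlog2ε : Real.log (2 * ε) = Real.log 2 + Real.log ε :=
      Real.log_mul two_ne_zero hε.ne'
    have hlog2εneg : Real.log (2 * ε) ≤ 0 := Real.log_nonpos (by linarith) (by linarith)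
    have hlogkm : Real.log (k / m) = Real.log k - Real.log m :=
      Real.log_div (by linarith) h.ne'
    have f1 : m * Real.log k ≤ 2 * ε * Real.log k :=
      mul_le_mul_of_nonneg_right hmε hlogk
    have f3 : m * (-Real.log (2 * ε)) ≤ 2 * ε * (-Real.log (2 * ε)) :=
      mul_le_mul_of_nonneg_right hmε (by linarith)
    have hnum := e_num
    have hlog2' := Real.log_two_lt_d9
    have f2 : 2 * ε * Real.negMulLog (m / (2 * ε)) ≤ 2 * ε * (Real.exp 1)⁻¹ :=
      mul_le_mul_of_nonneg_left hu (le_of_lt h2ε)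
    have f4 : (1 - Real.log 2) * m ≤ (1 - Real.log 2) * (2 * ε) :=
      mul_le_mul_of_nonneg_left hmε (by nlinarith)
    have f5 : 2 * ε * ((Real.exp 1)⁻¹ + 1 - 2 * Real.log 2) ≤ 0 := by nlinarith
    have f6 : 2 * ε * Real.log (2 * ε) = 2 * ε * Real.log 2 + 2 * ε * Real.log ε := by
      rw [hlog2ε]; ring
    rw [hlogkm, hlogkε]
    nlinarith
  
lemma fannes_nat {α : Type} [Fintype α] [Nonempty α] {P Q : α → ℝ}
    (hP0 : ∀ a, 0 ≤ P a) (hP1 : ∑ a, P a = 1)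
    (hQ0 : ∀ a, 0 ≤ Q a) (hQ1 : ∑ a, Q a = 1)
    {ε : ℝ} (hε : 0 < ε) (hε4 : ε < 1 / 4) (hTV : ∑ a, |P a - Q a| ≤ 2 * ε) :
    |(∑ a, Real.negMulLog (P a)) - ∑ a, Real.negMulLog (Q a)|
      ≤ 2 * ε * Real.log ((Fintype.card α : ℝ) / ε) := by
  set d : α → ℝ := fun a => |P a - Q a| with hddef
  have hd0 : ∀ a, 0 ≤ d a := fun a => abs_nonneg _
  have hda : ∀ a, d a ≤ 1 / 2 := by
    intro a
    have h1 : d a ≤ ∑ b, d b :=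
      Finset.single_le_sum (fun b _ => hd0 b) (mem_univ a)
    have : ∑ b, d b ≤ 2 * ε := hTV
    linarith
  have hPle1 : ∀ a, P a ≤ 1 := by
    intro a
    calc P a ≤ ∑ b, P b := Finset.single_le_sum (fun b _ => hP0 b) (mem_univ a)
      _ = 1 := hP1
  have hQle1 : ∀ a, Q a ≤ 1 := by
    intro a
    calc Q a ≤ ∑ b, Q b := Finset.single_le_sum (fun b _ => hQ0 b) (mem_univ a)
      _ = 1 := hQ1
  have step1 : |(∑ a, Real.negMulLog (P a)) - ∑ a, Real.negMulLog (Q a)|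
      ≤ ∑ a, |Real.negMulLog (P a) - Real.negMulLog (Q a)| := by
    rw [← Finset.sum_sub_distrib]
    exact Finset.abs_sum_le_sum_abs _ _
  have step2 : ∑ a, |Real.negMulLog (P a) - Real.negMulLog (Q a)|
      ≤ ∑ a, (Real.negMulLog (d a) + (1 - Real.log 2) * d a) :=
    Finset.sum_le_sum fun a _ =>
      abs_negMulLog_sub_le (hP0 a) (hPle1 a) (hQ0 a) (hQle1 a) (hda a)
  have step3 : ∑ a, (Real.negMulLog (d a) + (1 - Real.log 2) * d a)
      = (∑ a, Real.negMulLog (d a)) + (1 - Real.log 2) * ∑ a, d a := by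
    rw [Finset.sum_add_distrib, Finset.mul_sum]
  have step4 := sum_negMulLog_le d hd0 (rfl : ∑ a, d a = ∑ a, d a)
  have hm0 : 0 ≤ ∑ a, d a := Finset.sum_nonneg fun a _ => hd0 a
  have hk : (1:ℝ) ≤ (Fintype.card α : ℝ) := by
    exact_mod_cast Fintype.card_pos
  have step5 := key_numeric hm0 hTV hε hε4 hk
  linarith

/-- `lawOf` of a pmf is a pmf. -/
lemma lawOf_isPmf {Ω α : Type} [Fintype Ω] [Fintype α] [DecidableEq α]
    {p : Ω → ℝ} (hp : IsPmf p) (f : Ω → α) : IsPmf (lawOf p f) := by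
  constructor
  · intro a
    apply Finset.sum_nonneg
    intro ω _
    split
    · exact hp.1 ω
    · exact le_rfl
  · rw [show ∑ a, lawOf p f a = ∑ a, ∑ ω, if f ω = a then p ω else 0 from rfl,
      Finset.sum_comm, ← hp.2]
    apply Finset.sum_congr rfl
    intro ω _
    simp

/-- `H2` via `negMulLog`. -/
lemma H2_eq {α : Type} [Fintype α] (P : α → ℝ) :
    H2 P = (∑ a, Real.negMulLog (P a)) / Real.log 2 := by
  unfold H2
  rw [Finset.sum_div, ← Finset.sum_neg_distrib]
  apply Finset.sum_congr rfl
  intro a _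
  rw [Real.negMulLog, Real.logb]
  ring

/-- the marginal of the product pmf is `Q`. -/
lemma law_prod_marginal {𝒲 : Type} [Fintype 𝒲] [DecidableEq 𝒲] {n : ℕ}
    {Q : 𝒲 → ℝ} (hQ : IsPmf Q) (t : Fin n) (a : 𝒲) :
    lawOf (fun w : Fin n → 𝒲 => ∏ s, Q (w s)) (fun w => w t) a = Q a := by
  classical
  set f : Fin n → 𝒲 → ℝ :=
    fun s x => if s = t then (if x = a then Q x else 0) else Q x with hf
  have hterm : ∀ w : Fin n → 𝒲,
      (if w t = a then ∏ s, Q (w s) else 0) = ∏ s, f s (w s) := by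
    intro w
    have h1 : ∏ s, f s (w s) = f t (w t) * ∏ s ∈ Finset.univ.erase t, f s (w s) :=
      (Finset.mul_prod_erase Finset.univ (fun s => f s (w s)) (Finset.mem_univ t)).symm
    have h2 : ∏ s, Q (w s) = Q (w t) * ∏ s ∈ Finset.univ.erase t, Q (w s) :=
      (Finset.mul_prod_erase Finset.univ (fun s => Q (w s)) (Finset.mem_univ t)).symm
    have h3 : ∏ s ∈ Finset.univ.erase t, f s (w s) = ∏ s ∈ Finset.univ.erase t, Q (w s) := by
      apply Finset.prod_congr rfl
      intro s hs
      simp [hf, (Finset.mem_erase.mp hs).1]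
    rw [h1, h3]
    by_cases h : w t = a
    · rw [if_pos h, h2]
      simp [hf, h]
    · rw [if_neg h]
      simp [hf, h]
  unfold lawOf
  rw [Finset.sum_congr rfl fun w _ => hterm w, ← Fintype.prod_sum f]
  rw [Finset.prod_eq_single_of_mem t (Finset.mem_univ t)]
  · simp [hf]
  · intro s _ hs
    simp [hf, hs, hQ.2]

lemma fannes_bits {α : Type} [Fintype α] [Nonempty α] {P Q : α → ℝ}
    (hP : IsPmf P) (hQ : IsPmf Q) {ε : ℝ} (hε : 0 < ε) (hε4 : ε < 1 / 4)
    (hTV : ∑ a, |P a - Q a| ≤ 2 * ε) :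
    |H2 P - H2 Q| ≤ 2 * ε * Real.logb 2 ((Fintype.card α : ℝ) / ε) := by
  have hlog2 : (0:ℝ) < Real.log 2 := Real.log_pos one_lt_two
  have h := fannes_nat hP.1 hP.2 hQ.1 hQ.2 hε hε4 hTV
  rw [H2_eq P, H2_eq Q, div_sub_div_same, abs_div, abs_of_pos hlog2, Real.logb,
    ← mul_div_assoc]
  gcongr

lemma tv_marginal {𝒲 : Type} [Fintype 𝒲] [DecidableEq 𝒲] {n : ℕ}
    {p : (Fin n → 𝒲) → ℝ} {Q : 𝒲 → ℝ} (hQ : IsPmf Q) (t : Fin n) :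
    ∑ a, |lawOf p (fun w => w t) a - Q a| ≤ ∑ w, |p w - ∏ s, Q (w s)| := by
  have key : ∀ a, |lawOf p (fun w => w t) a - Q a|
      ≤ ∑ w, (if w t = a then |p w - ∏ s, Q (w s)| else 0) := by
    intro a
    have h1 : lawOf p (fun w => w t) a - Q a
        = ∑ w, (if w t = a then p w - ∏ s, Q (w s) else 0) := by
      rw [← law_prod_marginal hQ t a]
      unfold lawOf
      rw [← Finset.sum_sub_distrib]
      apply Finset.sum_congr rfl
      intro w _
      split <;> simp
    rw [h1]
    calc |∑ w, (if w t = a then p w - ∏ s, Q (w s) else 0)|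
        ≤ ∑ w, |if w t = a then p w - ∏ s, Q (w s) else 0| :=
          Finset.abs_sum_le_sum_abs _ _
      _ = ∑ w, (if w t = a then |p w - ∏ s, Q (w s)| else 0) := by
          apply Finset.sum_congr rfl
          intro w _
          split <;> simp
  calc ∑ a, |lawOf p (fun w => w t) a - Q a|
      ≤ ∑ a, ∑ w, (if w t = a then |p w - ∏ s, Q (w s)| else 0) :=
        Finset.sum_le_sum fun a _ => key a
    _ = ∑ w, ∑ a, (if w t = a then |p w - ∏ s, Q (w s)| else 0) := Finset.sum_comm
    _ = ∑ w, |p w - ∏ s, Q (w s)| := by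
        apply Finset.sum_congr rfl
        intro w _
        simp

lemma law_fst {𝒲 : Type} [Fintype 𝒲] [DecidableEq 𝒲] {n : ℕ}
    {p : (Fin n → 𝒲) → ℝ} (hp1 : ∑ w, p w = 1) (t : Fin n) :
    lawOf (fun ω : Fin n × (Fin n → 𝒲) => (1/(n:ℝ)) * p ω.2) (fun ω => ω.1) t
      = 1/(n:ℝ) := by
  unfold lawOf
  rw [Fintype.sum_prod_type]
  have h1 : ∀ s : Fin n, (∑ w : Fin n → 𝒲, if s = t then (1/(n:ℝ)) * p w else 0)
      = if s = t then 1/(n:ℝ) else 0 := by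
    intro s
    by_cases h : s = t
    · simp only [h, if_true]
      rw [← Finset.mul_sum, hp1, mul_one]
    · simp [h]
  rw [Finset.sum_congr rfl fun s _ => h1 s]
  simp

lemma law_eval {𝒲 : Type} [Fintype 𝒲] [DecidableEq 𝒲] {n : ℕ}
    (p : (Fin n → 𝒲) → ℝ) (a : 𝒲) :
    lawOf (fun ω : Fin n × (Fin n → 𝒲) => (1/(n:ℝ)) * p ω.2) (fun ω => ω.2 ω.1) a
      = ∑ t, (1/(n:ℝ)) * lawOf p (fun w => w t) a := by
  unfold lawOf
  rw [Fintype.sum_prod_type]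
  apply Finset.sum_congr rfl
  intro t _
  rw [Finset.mul_sum]
  apply Finset.sum_congr rfl
  intro w _
  split <;> simp

lemma law_pair {𝒲 : Type} [Fintype 𝒲] [DecidableEq 𝒲] {n : ℕ}
    (p : (Fin n → 𝒲) → ℝ) (a : 𝒲) (t : Fin n) :
    lawOf (fun ω : Fin n × (Fin n → 𝒲) => (1/(n:ℝ)) * p ω.2)
      (fun ω => (ω.2 ω.1, ω.1)) (a, t)
      = (1/(n:ℝ)) * lawOf p (fun w => w t) a := by
  unfold lawOf
  rw [Fintype.sum_prod_type]
  rw [Finset.sum_eq_single_of_mem t (Finset.mem_univ t)]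
  · rw [Finset.mul_sum]
    apply Finset.sum_congr rfl
    intro w _
    simp only [Prod.mk.injEq, and_true]
    split <;> simp
  · intro s _ hs
    apply Finset.sum_eq_zero
    intro w _
    simp [Prod.mk.injEq, hs]

lemma H2_unif {n : ℕ} (hn : 0 < n) :
    H2 (fun _ : Fin n => 1/(n:ℝ)) = Real.logb 2 n := by
  have hn0 : (0:ℝ) < n := by exact_mod_cast hn
  unfold H2
  rw [Finset.sum_const, Finset.card_univ, Fintype.card_fin, nsmul_eq_mul]
  rw [one_div, Real.logb_inv]
  field_simp

lemma H2_scaled_pair {𝒲 : Type} [Fintype 𝒲] {n : ℕ} (hn : 0 < n)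
    (P : Fin n → 𝒲 → ℝ) (hP : ∀ t, IsPmf (P t)) :
    H2 (fun x : 𝒲 × Fin n => (1/(n:ℝ)) * P x.2 x.1)
      = Real.logb 2 n + ∑ t, (1/(n:ℝ)) * H2 (P t) := by
  have hn0 : (0:ℝ) < n := by exact_mod_cast hn
  have hterm : ∀ x : ℝ, 0 ≤ x →
      ((1/(n:ℝ)) * x) * Real.logb 2 ((1/(n:ℝ)) * x)
        = (1/(n:ℝ)) * (x * Real.logb 2 x) - (1/(n:ℝ)) * x * Real.logb 2 n := by
    intro x hx
    rcases eq_or_lt_of_le hx with h | h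
    · rw [← h]; simp
    · rw [Real.logb_mul (by positivity) h.ne', one_div, Real.logb_inv]
      ring
  unfold H2
  rw [Fintype.sum_prod_type]
  have step : ∑ a, ∑ t, ((1/(n:ℝ)) * P t a) * Real.logb 2 ((1/(n:ℝ)) * P t a)
      = (∑ t, (1/(n:ℝ)) * ∑ a, P t a * Real.logb 2 (P t a)) - Real.logb 2 n := by
    rw [Finset.sum_comm]
    have h2 : ∀ t, ∑ a, ((1/(n:ℝ)) * P t a) * Real.logb 2 ((1/(n:ℝ)) * P t a)
        = (1/(n:ℝ)) * (∑ a, P t a * Real.logb 2 (P t a))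
            - (1/(n:ℝ)) * Real.logb 2 n := by
      intro t
      rw [Finset.sum_congr rfl fun a _ => hterm (P t a) ((hP t).1 a)]
      rw [Finset.sum_sub_distrib, ← Finset.mul_sum]
      congr 1
      have : ∀ a, (1/(n:ℝ)) * P t a * Real.logb 2 n
          = ((1/(n:ℝ)) * Real.logb 2 n) * P t a := fun a => by ring
      rw [Finset.sum_congr rfl fun a _ => this a, ← Finset.mul_sum, (hP t).2, mul_one]
    rw [Finset.sum_congr rfl fun t _ => h2 t, Finset.sum_sub_distrib]
    congr 1
    rw [Finset.sum_const, Finset.card_univ, Fintype.card_fin, nsmul_eq_mul]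
    field_simp
  rw [step]
  simp only [mul_neg, Finset.sum_neg_distrib]
  ring

end CuffAux

open CuffAux

/-- **Entropy bound from total variation (Lemma VI.3 of Cuff, second part).**
If `‖P_{W^n} − ∏_t Q_W‖_TV = ε ∈ (0,1/4)` and `T` is uniform on `[n]`
independent of `W^n`, then `I(W_T;T) ≤ g(ε) = 4ε log(|𝒲|/ε)`. -/
theorem mutual_info_time_index_le
    {𝒲 : Type} [Fintype 𝒲] [DecidableEq 𝒲] [Nonempty 𝒲]
    (n : ℕ) (hn : 0 < n) (p : (Fin n → 𝒲) → ℝ) (Q : 𝒲 → ℝ)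
    (hp : IsPmf p) (hQ : IsPmf Q) (ε : ℝ) (hε : ε ∈ Set.Ioo (0 : ℝ) (1 / 4))
    (hTV : TV p (fun w => ∏ t, Q (w t)) = ε) :
    -- joint law of `(T, W^n)` with `T` uniform and independent of `W^n`
    mi (fun ω : Fin n × (Fin n → 𝒲) => (1 / (n : ℝ)) * p ω.2)
        (fun ω => ω.2 ω.1)   -- `W_T`
        (fun ω => ω.1)       -- `T`
      ≤ 4 * ε * Real.logb 2 ((Fintype.card 𝒲 : ℝ) / ε) := by
  classical
  obtain ⟨hεpos, hε4⟩ := hε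
  have hn0 : (0:ℝ) < (n:ℝ) := by exact_mod_cast hn
  set r : Fin n × (Fin n → 𝒲) → ℝ := fun ω => (1/(n:ℝ)) * p ω.2 with hr
  set Pt : Fin n → 𝒲 → ℝ := fun t => lawOf p (fun w => w t) with hPtdef
  set Pbar : 𝒲 → ℝ := fun a => ∑ t, (1/(n:ℝ)) * Pt t a with hPbardef
  -- pmf facts
  have hr_pmf : IsPmf r := by
    constructor
    · intro ω
      have := hp.1 ω.2
      have : (0:ℝ) ≤ p ω.2 := this
      rw [hr]
      positivity
    · rw [hr]
      rw [Fintype.sum_prod_type]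
      have h1 : ∀ t : Fin n, ∑ w : Fin n → 𝒲, (1/(n:ℝ)) * p w = 1/(n:ℝ) := by
        intro t
        rw [← Finset.mul_sum, hp.2, mul_one]
      rw [Finset.sum_congr rfl fun t _ => h1 t, Finset.sum_const, Finset.card_univ,
        Fintype.card_fin, nsmul_eq_mul]
      field_simp
  have hPt_pmf : ∀ t, IsPmf (Pt t) := fun t => lawOf_isPmf hp _
  -- law identities
  have lawW : lawOf r (fun ω => ω.2 ω.1) = Pbar := funext fun a => law_eval p a
  have lawT : lawOf r (fun ω : Fin n × (Fin n → 𝒲) => ω.1)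
      = fun _ : Fin n => 1/(n:ℝ) := funext fun t => law_fst hp.2 t
  have lawP : lawOf r (fun ω : Fin n × (Fin n → 𝒲) => (ω.2 ω.1, ω.1))
      = fun x : 𝒲 × Fin n => (1/(n:ℝ)) * Pt x.2 x.1 := by
    funext x
    obtain ⟨a, t⟩ := x
    exact law_pair p a t
  have hPbar_pmf : IsPmf Pbar := lawW ▸ lawOf_isPmf hr_pmf _
  -- TV bounds
  have hTVsum : ∑ w, |p w - ∏ s, Q (w s)| = 2 * ε := by
    have h := hTV
    unfold TV at h
    linarith
  have hTVt : ∀ t, ∑ a, |Pt t a - Q a| ≤ 2 * ε := by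
    intro t
    calc ∑ a, |Pt t a - Q a| ≤ ∑ w, |p w - ∏ s, Q (w s)| := tv_marginal hQ t
      _ = 2 * ε := hTVsum
  have hTVbar : ∑ a, |Pbar a - Q a| ≤ 2 * ε := by
    have hsplit : ∀ a, Pbar a - Q a = ∑ t : Fin n, (1/(n:ℝ)) * (Pt t a - Q a) := by
      intro a
      have h0 : ∑ t : Fin n, (1/(n:ℝ)) * (Pt t a - Q a)
          = (∑ t : Fin n, (1/(n:ℝ)) * Pt t a) - ∑ t : Fin n, (1/(n:ℝ)) * Q a := by
        rw [← Finset.sum_sub_distrib]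
        apply Finset.sum_congr rfl
        intro t _
        ring
      rw [h0, Finset.sum_const, Finset.card_univ, Fintype.card_fin, nsmul_eq_mul]
      simp only [hPbardef]
      congr 1
      field_simp
    have key : ∀ a, |Pbar a - Q a| ≤ ∑ t : Fin n, (1/(n:ℝ)) * |Pt t a - Q a| := by
      intro a
      rw [hsplit a]
      calc |∑ t : Fin n, (1/(n:ℝ)) * (Pt t a - Q a)|
          ≤ ∑ t : Fin n, |(1/(n:ℝ)) * (Pt t a - Q a)| := Finset.abs_sum_le_sum_abs _ _
        _ = ∑ t : Fin n, (1/(n:ℝ)) * |Pt t a - Q a| := by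
            apply Finset.sum_congr rfl
            intro t _
            rw [abs_mul, abs_of_pos (by positivity : (0:ℝ) < 1/(n:ℝ))]
    calc ∑ a, |Pbar a - Q a| ≤ ∑ a, ∑ t : Fin n, (1/(n:ℝ)) * |Pt t a - Q a| :=
          Finset.sum_le_sum fun a _ => key a
      _ = ∑ t : Fin n, (1/(n:ℝ)) * ∑ a, |Pt t a - Q a| := by
          rw [Finset.sum_comm]
          exact Finset.sum_congr rfl fun t _ => (Finset.mul_sum _ _ _).symm
      _ ≤ ∑ t : Fin n, (1/(n:ℝ)) * (2 * ε) :=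
          Finset.sum_le_sum fun t _ => mul_le_mul_of_nonneg_left (hTVt t) (by positivity)
      _ = 2 * ε := by
          rw [Finset.sum_const, Finset.card_univ, Fintype.card_fin, nsmul_eq_mul]
          field_simp
  -- the mutual information identity
  have hmi : mi r (fun ω => ω.2 ω.1) (fun ω : Fin n × (Fin n → 𝒲) => ω.1)
      = H2 Pbar - ∑ t, (1/(n:ℝ)) * H2 (Pt t) := by
    simp only [mi, ent]
    rw [lawW, lawT, lawP, H2_unif hn, H2_scaled_pair hn Pt hPt_pmf]
    ring
  rw [hmi]
  -- Fannes bounds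
  have hfb_bar := fannes_bits hPbar_pmf hQ hεpos hε4 hTVbar
  have key2 : ∀ t : Fin n, H2 Pbar - H2 (Pt t)
      ≤ 4 * ε * Real.logb 2 ((Fintype.card 𝒲 : ℝ) / ε) := by
    intro t
    have h1 := abs_le.mp hfb_bar
    have h2 := abs_le.mp (fannes_bits (hPt_pmf t) hQ hεpos hε4 (hTVt t))
    linarith [h1.2, h2.1]
  have e1 : H2 Pbar = ∑ _t : Fin n, (1/(n:ℝ)) * H2 Pbar := by
    rw [Finset.sum_const, Finset.card_univ, Fintype.card_fin, nsmul_eq_mul]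
    field_simp
  calc H2 Pbar - ∑ t, (1/(n:ℝ)) * H2 (Pt t)
      = ∑ t : Fin n, ((1/(n:ℝ)) * H2 Pbar - (1/(n:ℝ)) * H2 (Pt t)) := by
        rw [Finset.sum_sub_distrib, ← e1]
    _ ≤ ∑ _t : Fin n, (1/(n:ℝ)) * (4 * ε * Real.logb 2 ((Fintype.card 𝒲 : ℝ) / ε)) := by
        apply Finset.sum_le_sum
        intro t _
        have h3 := mul_le_mul_of_nonneg_left (key2 t)
          (le_of_lt (by positivity : (0:ℝ) < 1/(n:ℝ)))
        calc (1/(n:ℝ)) * H2 Pbar - (1/(n:ℝ)) * H2 (Pt t)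
            = (1/(n:ℝ)) * (H2 Pbar - H2 (Pt t)) := by ring
          _ ≤ _ := h3
    _ = 4 * ε * Real.logb 2 ((Fintype.card 𝒲 : ℝ) / ε) := by
        rw [Finset.sum_const, Finset.card_univ, Fintype.card_fin, nsmul_eq_mul]
        field_simp

end
end

section
/- Cloud-mixing (soft covering) lemma: Let Q_{UV} be a pmf on a finite alphabet 𝒰×𝒱 and R > I(U;V). For each n ≥ 1, let B^(n) = {U^n(m)}_{m=1}^{2^{nR}} be a random codebook of 2^{nR} codewords drawn independently, each with i.i.d. coordinates ~ Q_U, and for a fixed codebook define the output pmf P(v^n) = 2^{−nR} Σ_{m=1}^{2^{nR}} ∏_{k=1}^n Q_{V|U}(v_k | U_k(m)). Then E‖P(v^n) − ∏_{k=1}^n Q_V(v_k)‖_TV → 0 as n → ∞, where the expectation is over the random codebook. -/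
open scoped BigOperators
open Finset Filter

noncomputable section

section CloudMixHelpers
set_option maxHeartbeats 1000000
set_option linter.unusedSectionVars false
set_option linter.unusedVariables false
namespace CloudMixAux

variable {α : Type} [Fintype α]

lemma sum_pi_prod {ι : Type} [Fintype ι] [DecidableEq ι] (f : ι → α → ℝ) :
    ∑ x : ι → α, ∏ i, f i (x i) = ∏ i, ∑ a, f i a := by
  rw [Finset.prod_univ_sum]
  rfl

lemma exp_coord {ι : Type} [Fintype ι] [DecidableEq ι] (p : α → ℝ) (hp : ∑ a, p a = 1)
    (h : α → ℝ) (j : ι) :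
    ∑ x : ι → α, (∏ i, p (x i)) * h (x j) = ∑ a, p a * h a := by
  have key : ∀ x : ι → α, (∏ i, p (x i)) * h (x j)
      = ∏ i, (p (x i) * (if i = j then h (x i) else 1)) := by
    intro x
    rw [Finset.prod_mul_distrib, Finset.prod_ite_eq' Finset.univ j (fun i => h (x i))]
    simp
  simp_rw [key]
  rw [sum_pi_prod (fun i a => p a * (if i = j then h a else 1))]
  have : ∀ i : ι, (∑ a, p a * (if i = j then h a else 1)) = if i = j then ∑ a, p a * h a else 1 := by
    intro i; split_ifs with hij <;> simp [hp]
  simp_rw [this]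
  rw [Finset.prod_ite_eq' Finset.univ j (fun _ => ∑ a, p a * h a)]
  simp

lemma exp_coord2 {ι : Type} [Fintype ι] [DecidableEq ι] (p : α → ℝ) (hp : ∑ a, p a = 1)
    (h g : α → ℝ) {j k : ι} (hjk : j ≠ k) :
    ∑ x : ι → α, (∏ i, p (x i)) * (h (x j) * g (x k))
      = (∑ a, p a * h a) * (∑ a, p a * g a) := by
  have key : ∀ x : ι → α, (∏ i, p (x i)) * (h (x j) * g (x k))
      = ∏ i, (p (x i) * ((if i = j then h (x i) else 1) * (if i = k then g (x i) else 1))) := by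
    intro x
    simp_rw [Finset.prod_mul_distrib]
    rw [Finset.prod_ite_eq' Finset.univ j (fun i => h (x i)),
      Finset.prod_ite_eq' Finset.univ k (fun i => g (x i))]
    simp [mul_assoc]
  simp_rw [key]
  rw [sum_pi_prod (fun i a => p a * ((if i = j then h a else 1) * (if i = k then g a else 1)))]
  have : ∀ i : ι, (∑ a, p a * ((if i = j then h a else 1) * (if i = k then g a else 1)))
      = (if i = j then ∑ a, p a * h a else 1) * (if i = k then ∑ a, p a * g a else 1) := by
    intro i
    rcases eq_or_ne i j with rfl | hij
    · simp [hjk, hp]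
    · rcases eq_or_ne i k with rfl | hik
      · simp [hij, hp]
      · simp [hij, hik, hp]
  simp_rw [this]
  rw [Finset.prod_mul_distrib, Finset.prod_ite_eq' Finset.univ j (fun _ => ∑ a, p a * h a),
    Finset.prod_ite_eq' Finset.univ k (fun _ => ∑ a, p a * g a)]
  simp

lemma sum_sq_centered {ι : Type} [Fintype ι] [DecidableEq ι] (p : α → ℝ)
    (hp : ∑ a, p a = 1) (c : α → ℝ) (hc : ∑ a, p a * c a = 0) :
    ∑ x : ι → α, (∏ i, p (x i)) * (∑ i, c (x i)) ^ 2
      = (Fintype.card ι : ℝ) * ∑ a, p a * (c a) ^ 2 := by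
  have expand : ∀ x : ι → α, (∑ i, c (x i)) ^ 2 = ∑ j, ∑ k, c (x j) * c (x k) := by
    intro x; rw [sq, Finset.sum_mul_sum]
  simp_rw [expand, Finset.mul_sum]
  rw [Finset.sum_comm]
  have swap2 : ∀ j : ι, ∑ x : ι → α, ∑ k, (∏ i, p (x i)) * (c (x j) * c (x k))
      = ∑ k, ∑ x : ι → α, (∏ i, p (x i)) * (c (x j) * c (x k)) := fun j => Finset.sum_comm
  simp_rw [swap2]
  have inner : ∀ j k : ι, (∑ x : ι → α, (∏ i, p (x i)) * (c (x j) * c (x k)))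
      = if j = k then ∑ a, p a * (c a) ^ 2 else 0 := by
    intro j k
    rcases eq_or_ne j k with rfl | hjk
    · rw [if_pos rfl, ← exp_coord p hp (fun a => (c a) ^ 2) j]
      congr 1; funext x; ring
    · rw [if_neg hjk, exp_coord2 p hp c c hjk, hc, mul_zero]
  simp_rw [inner]
  simp only [Finset.sum_ite_eq, Finset.mem_univ, if_true]
  rw [Finset.sum_const, Finset.card_univ, nsmul_eq_mul, Finset.mul_sum]

lemma exp_abs_le_sqrt (p f : α → ℝ) (hp0 : ∀ a, 0 ≤ p a) (hp1 : ∑ a, p a = 1) :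
    ∑ a, p a * |f a| ≤ Real.sqrt (∑ a, p a * (f a) ^ 2) := by
  apply Real.le_sqrt_of_sq_le
  calc (∑ a, p a * |f a|) ^ 2
      = (∑ a, Real.sqrt (p a) * (Real.sqrt (p a) * |f a|)) ^ 2 := by
        congr 1; apply Finset.sum_congr rfl; intro a _
        rw [← mul_assoc, Real.mul_self_sqrt (hp0 a)]
    _ ≤ (∑ a, Real.sqrt (p a) ^ 2) * ∑ a, (Real.sqrt (p a) * |f a|) ^ 2 :=
        Finset.sum_mul_sq_le_sq_mul_sq _ _ _
    _ = ∑ a, p a * (f a) ^ 2 := by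
        have e1 : ∀ a : α, Real.sqrt (p a) ^ 2 = p a := fun a => Real.sq_sqrt (hp0 a)
        simp_rw [mul_pow, e1, sq_abs, hp1, one_mul]


lemma pi_pmf_sum {ι : Type} [Fintype ι] [DecidableEq ι] (p : α → ℝ) (hp : ∑ a, p a = 1) :
    ∑ x : ι → α, ∏ i, p (x i) = 1 := by
  rw [sum_pi_prod (fun _ a => p a)]
  simp [hp]

/-- Second-moment bound on the expected deviation of an empirical average. -/
lemma avg_dev_le {α : Type} [Fintype α] (q : α → ℝ) (hq0 : ∀ a, 0 ≤ q a)
    (hq1 : ∑ a, q a = 1) (G : α → ℝ) (M : ℕ) (hM : 0 < M) (C : ℝ)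
    (hC : ∑ a, q a * (G a) ^ 2 ≤ C) :
    ∑ x : Fin M → α, (∏ m, q (x m)) * |(1 / (M:ℝ)) * ∑ m, G (x m) - ∑ a, q a * G a|
      ≤ Real.sqrt (C / M) := by
  have hM0 : (M:ℝ) ≠ 0 := Nat.cast_ne_zero.2 hM.ne'
  set μ := ∑ a, q a * G a with hμ
  set c : α → ℝ := fun a => G a - μ with hcdef
  have hc0 : ∑ a, q a * c a = 0 := by
    simp only [hcdef, mul_sub, Finset.sum_sub_distrib, ← Finset.sum_mul, hq1]
    simp [hμ]
  have hpB0 : ∀ x : Fin M → α, 0 ≤ ∏ m, q (x m) :=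
    fun x => Finset.prod_nonneg fun m _ => hq0 (x m)
  have hpB1 : ∑ x : Fin M → α, ∏ m, q (x m) = 1 := pi_pmf_sum q hq1
  have hrw : ∀ x : Fin M → α,
      (1 / (M:ℝ)) * ∑ m, G (x m) - μ = (1 / (M:ℝ)) * ∑ m, c (x m) := by
    intro x
    simp only [hcdef, Finset.sum_sub_distrib, Finset.sum_const, Finset.card_univ,
      Fintype.card_fin, nsmul_eq_mul, mul_sub]
    field_simp
  simp_rw [hrw]
  calc ∑ x : Fin M → α, (∏ m, q (x m)) * |(1 / (M:ℝ)) * ∑ m, c (x m)|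
      ≤ Real.sqrt (∑ x : Fin M → α, (∏ m, q (x m)) * ((1 / (M:ℝ)) * ∑ m, c (x m)) ^ 2) :=
        exp_abs_le_sqrt _ _ hpB0 hpB1
    _ ≤ Real.sqrt (C / M) := by
        apply Real.sqrt_le_sqrt
        have expand : ∀ x : Fin M → α,
            (∏ m, q (x m)) * ((1 / (M:ℝ)) * ∑ m, c (x m)) ^ 2
            = (1 / (M:ℝ)) ^ 2 * ((∏ m, q (x m)) * (∑ m, c (x m)) ^ 2) := fun x => by ring
        simp_rw [expand]
        rw [← Finset.mul_sum, sum_sq_centered q hq1 c hc0, Fintype.card_fin]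
        have hVle : ∑ a, q a * (c a) ^ 2 ≤ C := by
          have : ∑ a, q a * (c a) ^ 2 = (∑ a, q a * (G a) ^ 2) - μ ^ 2 := by
            simp only [hcdef]
            have : ∀ a : α, q a * (G a - μ) ^ 2
                = q a * (G a) ^ 2 - 2 * μ * (q a * G a) + μ ^ 2 * q a := fun a => by ring
            simp_rw [this, Finset.sum_add_distrib, Finset.sum_sub_distrib,
              ← Finset.mul_sum, ← hμ, hq1]
            ring
          rw [this]
          nlinarith [sq_nonneg μ]
        calc (1 / (M:ℝ)) ^ 2 * ((M:ℝ) * ∑ a, q a * (c a) ^ 2)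
            = (∑ a, q a * (c a) ^ 2) / M := by field_simp
          _ ≤ C / M := by
              have hMpos : (0:ℝ) < M := Nat.cast_pos.2 hM
              gcongr

/-- Chebyshev-type tail bound for iid sums. -/
lemma tail_le {α : Type} [Fintype α] (q : α → ℝ) (hq0 : ∀ a, 0 ≤ q a)
    (hq1 : ∑ a, q a = 1) (h : α → ℝ) (μ : ℝ) (hμ : ∑ a, q a * h a = μ)
    (δ : ℝ) (hδ : 0 < δ) (n : ℕ) (hn : 1 ≤ n) :
    ∑ z : Fin n → α, ((∏ k, q (z k)) *
        (if (∑ k, h (z k)) ≤ (n:ℝ) * (μ + δ) then 0 else 1))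
      ≤ (∑ a, q a * (h a - μ) ^ 2) / (δ ^ 2 * n) := by
  have hn0 : (0:ℝ) < n := by exact_mod_cast hn
  set c : α → ℝ := fun a => h a - μ with hcdef
  have hc0 : ∑ a, q a * c a = 0 := by
    simp only [hcdef, mul_sub, Finset.sum_sub_distrib, ← Finset.sum_mul, hq1, hμ]
    ring
  have key : ∀ z : Fin n → α,
      (∏ k, q (z k)) * (if (∑ k, h (z k)) ≤ (n:ℝ) * (μ + δ) then 0 else 1)
        ≤ (∏ k, q (z k)) * ((∑ k, c (z k)) ^ 2 / ((n:ℝ) * δ) ^ 2) := by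
    intro z
    have hq : 0 ≤ ∏ k, q (z k) := Finset.prod_nonneg fun k _ => hq0 (z k)
    split_ifs with hcond
    · rw [mul_zero]
      positivity
    · push_neg at hcond
      apply mul_le_mul_of_nonneg_left _ hq
      have hnd : (0:ℝ) < (n:ℝ) * δ := mul_pos hn0 hδ
      have hsum : (n:ℝ) * δ ≤ ∑ k, c (z k) := by
        have he : ∑ k : Fin n, c (z k) = (∑ k, h (z k)) - (n:ℝ) * μ := by
          simp [hcdef, Finset.sum_sub_distrib, Finset.sum_const, Finset.card_univ,
            nsmul_eq_mul]
        rw [he]; nlinarith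
      rw [le_div_iff₀ (by positivity), one_mul]
      exact pow_le_pow_left₀ hnd.le hsum 2
  calc ∑ z : Fin n → α, ((∏ k, q (z k)) *
        (if (∑ k, h (z k)) ≤ (n:ℝ) * (μ + δ) then 0 else 1))
      ≤ ∑ z : Fin n → α, (∏ k, q (z k)) * ((∑ k, c (z k)) ^ 2 / ((n:ℝ) * δ) ^ 2) :=
        Finset.sum_le_sum fun z _ => key z
    _ = (∑ a, q a * (h a - μ) ^ 2) / (δ ^ 2 * n) := by
        have : ∀ z : Fin n → α, (∏ k, q (z k)) * ((∑ k, c (z k)) ^ 2 / ((n:ℝ) * δ) ^ 2)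
            = (1 / ((n:ℝ) * δ) ^ 2) * ((∏ k, q (z k)) * (∑ k, c (z k)) ^ 2) := fun z => by ring
        simp_rw [this]
        rw [← Finset.mul_sum, sum_sq_centered q hq1 c hc0, Fintype.card_fin]
        field_simp
        ring

lemma abstract_bound {β γ : Type} [Fintype β] [Fintype γ]
    (pU : β → ℝ) (hpU0 : ∀ u, 0 ≤ pU u) (hpU1 : ∑ u, pU u = 1)
    (Wn : β → γ → ℝ)
    (Qn : γ → ℝ) (hQn0 : ∀ v, 0 ≤ Qn v) (hQn1 : ∑ v, Qn v = 1)
    (hmean : ∀ v, ∑ u, pU u * Wn u v = Qn v)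
    (g g' : β → γ → ℝ) (hsplit : ∀ u v, Wn u v = g u v + g' u v)
    (hg'0 : ∀ u v, 0 ≤ g' u v)
    (K : ℝ) (hK0 : 0 < K)
    (hg2 : ∀ u v, pU u * (g u v) ^ 2 ≤ K * Qn v * (pU u * Wn u v))
    (M : ℕ) (hM : 0 < M) (tailB : ℝ)
    (htail : ∑ v, ∑ u, pU u * g' u v ≤ tailB) :
    ∑ B : Fin M → β, (∏ m, pU (B m)) *
        ((∑ v, |(1 / (M:ℝ)) * (∑ m, Wn (B m) v) - Qn v|) / 2)
      ≤ (1/2) * Real.sqrt (K / (M:ℝ)) + tailB := by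
  have hMR : (0:ℝ) < (M:ℝ) := Nat.cast_pos.2 hM
  have hpB0 : ∀ B : Fin M → β, 0 ≤ ∏ m, pU (B m) :=
    fun B => Finset.prod_nonneg fun m _ => hpU0 _
  have hpB1 : (∑ B : Fin M → β, ∏ m, pU (B m)) = 1 := pi_pmf_sum pU hpU1
  have hEg'0 : ∀ v, 0 ≤ ∑ u, pU u * g' u v :=
    fun v => Finset.sum_nonneg fun u _ => mul_nonneg (hpU0 u) (hg'0 u v)
  have tri : ∀ (B : Fin M → β) (v : γ),
      |(1 / (M:ℝ)) * (∑ m, Wn (B m) v) - Qn v|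
        ≤ |(1 / (M:ℝ)) * (∑ m, g (B m) v) - ∑ u, pU u * g u v|
          + ((1 / (M:ℝ)) * ∑ m, g' (B m) v) + ∑ u, pU u * g' u v := by
    intro B v
    have hEsplit : (∑ u, pU u * g u v) + (∑ u, pU u * g' u v) = Qn v := by
      rw [← Finset.sum_add_distrib, ← hmean v]
      exact Finset.sum_congr rfl fun u _ => by rw [hsplit u v]; ring
    have hdec : (1 / (M:ℝ)) * (∑ m, Wn (B m) v) - Qn v
        = ((1 / (M:ℝ)) * (∑ m, g (B m) v) - ∑ u, pU u * g u v)
          + ((1 / (M:ℝ)) * ∑ m, g' (B m) v) + (-(∑ u, pU u * g' u v)) := by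
      rw [← hEsplit]
      have h1 : (∑ m, Wn (B m) v) = (∑ m, g (B m) v) + ∑ m, g' (B m) v := by
        rw [← Finset.sum_add_distrib]
        exact Finset.sum_congr rfl fun m _ => hsplit (B m) v
      rw [h1]; ring
    rw [hdec]
    refine (abs_add_three _ _ _).trans ?_
    have h2 : |(1 / (M:ℝ)) * ∑ m, g' (B m) v| = (1 / (M:ℝ)) * ∑ m, g' (B m) v := by
      apply abs_of_nonneg
      exact mul_nonneg (by positivity) (Finset.sum_nonneg fun m _ => hg'0 _ _)
    rw [h2, abs_neg, abs_of_nonneg (hEg'0 v)]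
  have S1 : ∑ B : Fin M → β, ∑ v, (∏ m, pU (B m)) *
        |(1 / (M:ℝ)) * (∑ m, g (B m) v) - ∑ u, pU u * g u v|
      ≤ Real.sqrt (K / (M:ℝ)) := by
    rw [Finset.sum_comm]
    have per_v : ∀ v : γ, (∑ B : Fin M → β, (∏ m, pU (B m)) *
          |(1 / (M:ℝ)) * (∑ m, g (B m) v) - ∑ u, pU u * g u v|)
        ≤ Real.sqrt (K / (M:ℝ)) * Qn v := by
      intro v
      have hC : ∑ u, pU u * (g u v) ^ 2 ≤ K * Qn v ^ 2 :=
        calc ∑ u, pU u * (g u v) ^ 2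
            ≤ ∑ u, K * Qn v * (pU u * Wn u v) := Finset.sum_le_sum fun u _ => hg2 u v
          _ = K * Qn v * Qn v := by rw [← Finset.mul_sum, hmean v]
          _ = K * Qn v ^ 2 := by ring
      have hdev := avg_dev_le pU hpU0 hpU1 (fun u => g u v) M hM (K * Qn v ^ 2) hC
      refine hdev.trans (le_of_eq ?_)
      rw [show K * Qn v ^ 2 / (M:ℝ) = (K / (M:ℝ)) * Qn v ^ 2 by ring,
        Real.sqrt_mul (by positivity) _, Real.sqrt_sq (hQn0 v)]
    calc (∑ v, ∑ B : Fin M → β, (∏ m, pU (B m)) *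
          |(1 / (M:ℝ)) * (∑ m, g (B m) v) - ∑ u, pU u * g u v|)
        ≤ ∑ v, Real.sqrt (K / (M:ℝ)) * Qn v := Finset.sum_le_sum fun v _ => per_v v
      _ = Real.sqrt (K / (M:ℝ)) := by rw [← Finset.mul_sum, hQn1, mul_one]
  have S2 : ∑ B : Fin M → β, ∑ v, (∏ m, pU (B m)) * ((1 / (M:ℝ)) * ∑ m, g' (B m) v)
      = ∑ v, ∑ u, pU u * g' u v := by
    rw [Finset.sum_comm]
    apply Finset.sum_congr rfl
    intro v _
    have h1 : ∀ B : Fin M → β, (∏ m, pU (B m)) * ((1 / (M:ℝ)) * ∑ m, g' (B m) v)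
        = (1 / (M:ℝ)) * ∑ m, (∏ m', pU (B m')) * g' (B m) v := by
      intro B
      simp only [Finset.mul_sum]
      exact Finset.sum_congr rfl fun m _ => by ring
    simp_rw [h1]
    rw [← Finset.mul_sum, Finset.sum_comm]
    have h2 : ∀ m : Fin M, (∑ B : Fin M → β, (∏ m', pU (B m')) * g' (B m) v)
        = ∑ u, pU u * g' u v := fun m => exp_coord pU hpU1 (fun u => g' u v) m
    simp_rw [h2]
    rw [Finset.sum_const, Finset.card_univ, Fintype.card_fin, nsmul_eq_mul]
    field_simp
  have S3 : ∑ B : Fin M → β, ∑ v, (∏ m, pU (B m)) * (∑ u, pU u * g' u v)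
      = ∑ v, ∑ u, pU u * g' u v := by
    have h1 : ∀ B : Fin M → β, (∑ v, (∏ m, pU (B m)) * (∑ u, pU u * g' u v))
        = (∏ m, pU (B m)) * ∑ v, ∑ u, pU u * g' u v := fun B => (Finset.mul_sum _ _ _).symm
    simp_rw [h1]
    rw [← Finset.sum_mul, hpB1, one_mul]
  calc ∑ B : Fin M → β, (∏ m, pU (B m)) *
        ((∑ v, |(1 / (M:ℝ)) * (∑ m, Wn (B m) v) - Qn v|) / 2)
      = (1/2) * ∑ B : Fin M → β, ∑ v, (∏ m, pU (B m)) *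
          |(1 / (M:ℝ)) * (∑ m, Wn (B m) v) - Qn v| := by
        rw [Finset.mul_sum]
        exact Finset.sum_congr rfl fun B _ => by rw [← Finset.mul_sum]; ring
    _ ≤ (1/2) * ∑ B : Fin M → β, ∑ v, (∏ m, pU (B m)) *
          (|(1 / (M:ℝ)) * (∑ m, g (B m) v) - ∑ u, pU u * g u v|
            + ((1 / (M:ℝ)) * ∑ m, g' (B m) v) + ∑ u, pU u * g' u v) := by
        apply mul_le_mul_of_nonneg_left _ (by norm_num)
        exact Finset.sum_le_sum fun B _ => Finset.sum_le_sum fun v _ =>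
          mul_le_mul_of_nonneg_left (tri B v) (hpB0 B)
    _ = (1/2) * ((∑ B : Fin M → β, ∑ v, (∏ m, pU (B m)) *
            |(1 / (M:ℝ)) * (∑ m, g (B m) v) - ∑ u, pU u * g u v|)
          + (∑ B : Fin M → β, ∑ v, (∏ m, pU (B m)) * ((1 / (M:ℝ)) * ∑ m, g' (B m) v))
          + ∑ B : Fin M → β, ∑ v, (∏ m, pU (B m)) * (∑ u, pU u * g' u v)) := by
        simp_rw [mul_add, Finset.sum_add_distrib]
        ring
    _ ≤ (1/2) * (Real.sqrt (K / (M:ℝ)) + tailB + tailB) := by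
        apply mul_le_mul_of_nonneg_left _ (by norm_num)
        exact add_le_add (add_le_add S1 (S2 ▸ htail)) (S3 ▸ htail)
    _ = (1/2) * Real.sqrt (K / (M:ℝ)) + tailB := by ring



variable {𝒰 𝒱 : Type} [Fintype 𝒰] [Fintype 𝒱] [DecidableEq 𝒰] [DecidableEq 𝒱]

lemma law_fst (QU : 𝒰 → ℝ) (W : 𝒰 → 𝒱 → ℝ) (hW : ∀ u, ∑ v, W u v = 1) :
    lawOf (fun uv : 𝒰 × 𝒱 => QU uv.1 * W uv.1 uv.2) Prod.fst = QU := by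
  funext u
  unfold lawOf
  rw [Fintype.sum_prod_type]
  have : ∀ a : 𝒰, (∑ b, if (a, b).1 = u then QU a * W a b else 0)
      = if a = u then QU a else 0 := by
    intro a
    split_ifs with h
    · simp only [h, if_pos rfl, ← Finset.mul_sum, hW u]
      simp [h]
    · simp [h]
  simp_rw [this]
  simp [Finset.sum_ite_eq']

lemma law_snd (QU : 𝒰 → ℝ) (W : 𝒰 → 𝒱 → ℝ) :
    lawOf (fun uv : 𝒰 × 𝒱 => QU uv.1 * W uv.1 uv.2) Prod.snd
      = fun v => ∑ u, QU u * W u v := by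
  funext v
  unfold lawOf
  rw [Fintype.sum_prod_type]
  apply Finset.sum_congr rfl
  intro a _
  simp [Finset.sum_ite_eq']

lemma law_pair (p : (𝒰 × 𝒱) → ℝ) :
    lawOf p (fun ω : 𝒰 × 𝒱 => (Prod.fst ω, Prod.snd ω)) = p := by
  funext z
  unfold lawOf
  have : ∀ ω : 𝒰 × 𝒱, (Prod.fst ω, Prod.snd ω) = ω := fun ω => rfl
  simp_rw [this]
  simp [Finset.sum_ite_eq']

lemma mi_eq (QU : 𝒰 → ℝ) (W : 𝒰 → 𝒱 → ℝ) (hQU : IsPmf QU) (hW : ∀ u, IsPmf (W u)) :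
    mi (fun uv : 𝒰 × 𝒱 => QU uv.1 * W uv.1 uv.2) Prod.fst Prod.snd
      = ∑ u, ∑ v, QU u * W u v *
          (Real.logb 2 (W u v) - Real.logb 2 (∑ u', QU u' * W u' v)) := by
  have hWs : ∀ u, ∑ v, W u v = 1 := fun u => (hW u).2
  set QV : 𝒱 → ℝ := fun v => ∑ u, QU u * W u v with hQV
  unfold mi ent
  rw [law_fst QU W hWs, law_snd QU W, law_pair]
  unfold H2
  rw [Fintype.sum_prod_type]
  -- split logb of product
  have hsplit : ∀ (u : 𝒰) (v : 𝒱),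
      QU u * W u v * Real.logb 2 (QU u * W u v)
        = QU u * W u v * Real.logb 2 (QU u) + QU u * W u v * Real.logb 2 (W u v) := by
    intro u v
    rcases eq_or_ne (QU u) 0 with h | h
    · simp [h]
    · rcases eq_or_ne (W u v) 0 with h2 | h2
      · simp [h2]
      · rw [Real.logb_mul h h2]; ring
  simp_rw [hsplit, Finset.sum_add_distrib]
  have hQUlog : ∀ u : 𝒰, (∑ v, QU u * W u v * Real.logb 2 (QU u))
      = QU u * Real.logb 2 (QU u) := by
    intro u
    have : ∀ v : 𝒱, QU u * W u v * Real.logb 2 (QU u)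
        = W u v * (QU u * Real.logb 2 (QU u)) := fun v => by ring
    simp_rw [this]
    rw [← Finset.sum_mul, hWs u, one_mul]
  simp_rw [hQUlog]
  have hQVlog : (∑ v, QV v * Real.logb 2 (QV v))
      = ∑ u, ∑ v, QU u * W u v * Real.logb 2 (QV v) := by
    rw [Finset.sum_comm]
    apply Finset.sum_congr rfl
    intro v _
    rw [hQV, Finset.sum_mul]
  have hfinal : ∑ u, ∑ v, QU u * W u v *
      (Real.logb 2 (W u v) - Real.logb 2 (QV v))
      = (∑ u, ∑ v, QU u * W u v * Real.logb 2 (W u v))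
        - ∑ u, ∑ v, QU u * W u v * Real.logb 2 (QV v) := by
    rw [← Finset.sum_sub_distrib]
    apply Finset.sum_congr rfl
    intro u _
    rw [← Finset.sum_sub_distrib]
    apply Finset.sum_congr rfl
    intro v _
    ring
  rw [hfinal, ← hQVlog]
  ring



lemma main_bound {𝒰 𝒱 : Type} [Fintype 𝒰] [Fintype 𝒱] [DecidableEq 𝒰] [DecidableEq 𝒱]
    (QU : 𝒰 → ℝ) (W : 𝒰 → 𝒱 → ℝ) (hQU : IsPmf QU) (hW : ∀ u, IsPmf (W u))
    (I δ : ℝ) (hδ : 0 < δ)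
    (hI : ∑ z : 𝒰 × 𝒱, (QU z.1 * W z.1 z.2) *
        (Real.logb 2 (W z.1 z.2) - Real.logb 2 (∑ u', QU u' * W u' z.2)) = I)
    (n M : ℕ) (hn : 1 ≤ n) (hM : (2:ℝ) ^ ((n:ℝ) * (I + 2*δ)) ≤ (M:ℝ)) :
    ∑ B : Fin M → Fin n → 𝒰,
      (∏ m, ∏ k, QU (B m k)) *
        TV (fun v : Fin n → 𝒱 => (1 / (M:ℝ)) * ∑ m, ∏ k, W (B m k) (v k))
           (fun v : Fin n → 𝒱 => ∏ k, ∑ u, QU u * W u (v k))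
      ≤ (1/2) * ((2:ℝ) ^ (-(δ/2)) : ℝ) ^ n
        + ((∑ z : 𝒰 × 𝒱, (QU z.1 * W z.1 z.2) *
            ((Real.logb 2 (W z.1 z.2) - Real.logb 2 (∑ u', QU u' * W u' z.2)) - I) ^ 2)
            / δ ^ 2) * (1 / (n:ℝ)) := by
  classical
  have hn0 : (0:ℝ) < (n:ℝ) := by exact_mod_cast hn
  have hMpos : 0 < M := by
    by_contra h
    push_neg at h
    interval_cases M
    · simp only [Nat.cast_zero] at hM
      exact absurd hM (not_le.2 (Real.rpow_pos_of_pos two_pos _))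
  have hMR : (0:ℝ) < (M:ℝ) := Nat.cast_pos.2 hMpos
  -- basic objects
  set QV : 𝒱 → ℝ := fun v => ∑ u, QU u * W u v with hQVdef
  have hQV0 : ∀ v, 0 ≤ QV v :=
    fun v => Finset.sum_nonneg fun u _ => mul_nonneg (hQU.1 u) ((hW u).1 v)
  have hQV1 : ∑ v, QV v = 1 := by
    rw [hQVdef]
    rw [Finset.sum_comm]
    calc ∑ u, ∑ v, QU u * W u v = ∑ u, QU u * ∑ v, W u v := by
          exact Finset.sum_congr rfl fun u _ => (Finset.mul_sum _ _ _).symm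
      _ = 1 := by simp_rw [fun u => (hW u).2]; simp [hQU.2]
  set iot : 𝒰 → 𝒱 → ℝ := fun u v => Real.logb 2 (W u v) - Real.logb 2 (QV v) with hiotdef
  set θ : ℝ := (n:ℝ) * (I + δ) with hθdef
  set K : ℝ := (2:ℝ) ^ θ with hKdef
  have hK0 : 0 < K := Real.rpow_pos_of_pos two_pos _
  set pU : (Fin n → 𝒰) → ℝ := fun u => ∏ k, QU (u k) with hpUdef
  set Wn : (Fin n → 𝒰) → (Fin n → 𝒱) → ℝ := fun u v => ∏ k, W (u k) (v k) with hWndef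
  set Qn : (Fin n → 𝒱) → ℝ := fun v => ∏ k, QV (v k) with hQndef
  set T : (Fin n → 𝒰) → (Fin n → 𝒱) → ℝ := fun u v => ∑ k, iot (u k) (v k) with hTdef
  set g : (Fin n → 𝒰) → (Fin n → 𝒱) → ℝ :=
    fun u v => if T u v ≤ θ then Wn u v else 0 with hgdef
  set g' : (Fin n → 𝒰) → (Fin n → 𝒱) → ℝ :=
    fun u v => if T u v ≤ θ then 0 else Wn u v with hg'def
  have hpU0 : ∀ u, 0 ≤ pU u := fun u => Finset.prod_nonneg fun k _ => hQU.1 _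
  have hpU1 : ∑ u : Fin n → 𝒰, pU u = 1 := pi_pmf_sum QU hQU.2
  have hWn0 : ∀ u v, 0 ≤ Wn u v := fun u v => Finset.prod_nonneg fun k _ => (hW _).1 _
  have hQn0 : ∀ v, 0 ≤ Qn v := fun v => Finset.prod_nonneg fun k _ => hQV0 _
  have hQn1 : ∑ v : Fin n → 𝒱, Qn v = 1 := pi_pmf_sum QV hQV1
  have hmean : ∀ v : Fin n → 𝒱, ∑ u : Fin n → 𝒰, pU u * Wn u v = Qn v := by
    intro v
    have h1 : ∀ u : Fin n → 𝒰, pU u * Wn u v = ∏ k, (QU (u k) * W (u k) (v k)) := by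
      intro u; rw [hpUdef, hWndef]; exact (Finset.prod_mul_distrib).symm
    simp_rw [h1]
    rw [sum_pi_prod (fun k a => QU a * W a (v k))]
  have hsplit : ∀ u v, Wn u v = g u v + g' u v := by
    intro u v; rw [hgdef, hg'def]
    by_cases hc : T u v ≤ θ <;> simp [hc]
  have hg'0 : ∀ u v, 0 ≤ g' u v := by
    intro u v; rw [hg'def]
    by_cases hc : T u v ≤ θ <;> simp [hc, hWn0 u v]
  -- the second-moment bound for the typical part
  have hg2 : ∀ u v, pU u * (g u v) ^ 2 ≤ K * Qn v * (pU u * Wn u v) := by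
    intro u v
    by_cases hc : T u v ≤ θ
    · have hgeq : g u v = Wn u v := by rw [hgdef]; exact if_pos hc
      rw [hgeq]
      rcases (hpU0 u).eq_or_lt with hp0 | hppos
      · rw [← hp0]; simp
      · have hQUk : ∀ k, 0 < QU (u k) := by
          intro k
          rcases (hQU.1 (u k)).eq_or_lt with h0 | h
          · exact absurd (Finset.prod_eq_zero (Finset.mem_univ k) h0.symm) hppos.ne'
          · exact h
        rcases (hWn0 u v).eq_or_lt with hw0 | hwpos
        · rw [← hw0]; simp [mul_nonneg, hK0.le, hQn0 v, hpU0 u]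
        · have hWk : ∀ k, 0 < W (u k) (v k) := by
            intro k
            rcases ((hW (u k)).1 (v k)).eq_or_lt with h0 | h
            · exact absurd (Finset.prod_eq_zero (Finset.mem_univ k) h0.symm) hwpos.ne'
            · exact h
          have hQVk : ∀ k, 0 < QV (v k) := by
            intro k
            have h1 : QU (u k) * W (u k) (v k) ≤ QV (v k) :=
              Finset.single_le_sum
                (fun a _ => mul_nonneg (hQU.1 a) ((hW a).1 _)) (Finset.mem_univ (u k))
            exact lt_of_lt_of_le (mul_pos (hQUk k) (hWk k)) h1
          have hQnpos : 0 < Qn v := Finset.prod_pos fun k _ => hQVk k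
          have hWle : Wn u v ≤ K * Qn v := by
            have e1 : (2:ℝ) ^ (∑ k, Real.logb 2 (W (u k) (v k))) = Wn u v := by
              rw [Real.rpow_sum_of_pos two_pos]
              exact Finset.prod_congr rfl fun k _ =>
                Real.rpow_logb two_pos (by norm_num) (hWk k)
            have e2 : (2:ℝ) ^ (∑ k, Real.logb 2 (QV (v k))) = Qn v := by
              rw [Real.rpow_sum_of_pos two_pos]
              exact Finset.prod_congr rfl fun k _ =>
                Real.rpow_logb two_pos (by norm_num) (hQVk k)
            have e3 : K * Qn v = (2:ℝ) ^ (θ + ∑ k, Real.logb 2 (QV (v k))) := by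
              rw [Real.rpow_add two_pos, e2, hKdef]
            rw [← e1, e3]
            apply (Real.rpow_le_rpow_left_iff one_lt_two).mpr
            have hTe : T u v = (∑ k, Real.logb 2 (W (u k) (v k)))
                - ∑ k, Real.logb 2 (QV (v k)) := by
              rw [hTdef]
              simp only [hiotdef]
              rw [Finset.sum_sub_distrib]
            rw [hTe] at hc
            linarith
          calc pU u * (Wn u v) ^ 2 = (pU u * Wn u v) * Wn u v := by ring
            _ ≤ (pU u * Wn u v) * (K * Qn v) :=
                mul_le_mul_of_nonneg_left hWle (mul_nonneg (hpU0 u) (hWn0 u v))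
            _ = K * Qn v * (pU u * Wn u v) := by ring
    · have hgeq : g u v = 0 := by rw [hgdef]; exact if_neg hc
      rw [hgeq]
      have : (0:ℝ) ≤ K * Qn v * (pU u * Wn u v) :=
        mul_nonneg (mul_nonneg hK0.le (hQn0 v)) (mul_nonneg (hpU0 u) (hWn0 u v))
      simpa using this
  -- tail bound
  set tailB : ℝ := (∑ z : 𝒰 × 𝒱, (QU z.1 * W z.1 z.2) *
      ((Real.logb 2 (W z.1 z.2) - Real.logb 2 (∑ u', QU u' * W u' z.2)) - I) ^ 2)
      / (δ ^ 2 * (n:ℝ)) with htailBdef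
  have htail : ∑ v : Fin n → 𝒱, ∑ u : Fin n → 𝒰, pU u * g' u v ≤ tailB := by
    set q2 : 𝒰 × 𝒱 → ℝ := fun z => QU z.1 * W z.1 z.2 with hq2def
    have hq20 : ∀ z, 0 ≤ q2 z := fun z => mul_nonneg (hQU.1 _) ((hW _).1 _)
    have hq21 : ∑ z, q2 z = 1 := by
      rw [hq2def, Fintype.sum_prod_type]
      calc ∑ u, ∑ v, QU u * W u v = ∑ u, QU u * ∑ v, W u v := by
            exact Finset.sum_congr rfl fun u _ => (Finset.mul_sum _ _ _).symm
        _ = 1 := by simp_rw [fun u => (hW u).2]; simp [hQU.2]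
    set h2 : 𝒰 × 𝒱 → ℝ := fun z => iot z.1 z.2 with hh2def
    have hmu : ∑ z, q2 z * h2 z = I := by
      rw [← hI]
    have step1 : ∑ v : Fin n → 𝒱, ∑ u : Fin n → 𝒰, pU u * g' u v
        = ∑ z : Fin n → 𝒰 × 𝒱, ((∏ k, q2 (z k)) *
            (if (∑ k, h2 (z k)) ≤ (n:ℝ) * (I + δ) then 0 else 1)) := by
      rw [Finset.sum_comm]
      have hpt : ∀ (u : Fin n → 𝒰) (v : Fin n → 𝒱),
          pU u * g' u v = (∏ k, q2 (u k, v k)) *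
            (if (∑ k, iot (u k) (v k)) ≤ (n:ℝ) * (I + δ) then 0 else 1) := by
        intro u v
        simp only [hg'def, hTdef, hθdef, hpUdef, hWndef, hq2def]
        split_ifs with hc
        · simp
        · rw [mul_one, ← Finset.prod_mul_distrib]
      simp_rw [hpt]
      calc ∑ u : Fin n → 𝒰, ∑ v : Fin n → 𝒱, (∏ k, q2 (u k, v k)) *
            (if (∑ k, iot (u k) (v k)) ≤ (n:ℝ) * (I + δ) then 0 else 1)
          = ∑ p : (Fin n → 𝒰) × (Fin n → 𝒱), (∏ k, q2 (p.1 k, p.2 k)) *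
            (if (∑ k, iot (p.1 k) (p.2 k)) ≤ (n:ℝ) * (I + δ) then 0 else 1) :=
            (Fintype.sum_prod_type (fun p : (Fin n → 𝒰) × (Fin n → 𝒱) =>
              (∏ k, q2 (p.1 k, p.2 k)) *
                (if (∑ k, iot (p.1 k) (p.2 k)) ≤ (n:ℝ) * (I + δ) then 0 else 1))).symm
        _ = ∑ z : Fin n → 𝒰 × 𝒱, ((∏ k, q2 (z k)) *
            (if (∑ k, h2 (z k)) ≤ (n:ℝ) * (I + δ) then 0 else 1)) :=
            (Fintype.sum_equiv (Equiv.arrowProdEquivProdArrow (Fin n) (fun _ => 𝒰) (fun _ => 𝒱)) _ _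
              (fun z => rfl)).symm
    rw [step1, htailBdef]
    exact tail_le q2 hq20 hq21 h2 I hmu δ hδ n hn
  -- apply the abstract bound
  have habs := abstract_bound pU hpU0 hpU1 Wn Qn hQn0 hQn1 hmean g g' hsplit hg'0
    K hK0 hg2 M hMpos tailB htail
  have hstart : ∑ B : Fin M → Fin n → 𝒰,
      (∏ m, ∏ k, QU (B m k)) *
        TV (fun v : Fin n → 𝒱 => (1 / (M:ℝ)) * ∑ m, ∏ k, W (B m k) (v k))
           (fun v : Fin n → 𝒱 => ∏ k, ∑ u, QU u * W u (v k))
      = ∑ B : Fin M → Fin n → 𝒰, (∏ m, pU (B m)) *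
        ((∑ v, |(1 / (M:ℝ)) * (∑ m, Wn (B m) v) - Qn v|) / 2) := rfl
  rw [hstart]
  refine habs.trans (add_le_add ?_ (le_of_eq ?_))
  · -- sqrt(K/M) ≤ (2^{-δ/2})^n
    apply mul_le_mul_of_nonneg_left _ (by norm_num)
    have h1 : K / (M:ℝ) ≤ (2:ℝ) ^ (-(n:ℝ) * δ) := by
      have h2 : K / (M:ℝ) ≤ K / (2:ℝ) ^ ((n:ℝ) * (I + 2*δ)) := by
        gcongr
      refine h2.trans (le_of_eq ?_)
      rw [hKdef, hθdef, ← Real.rpow_sub two_pos]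
      congr 1
      ring
    calc Real.sqrt (K / (M:ℝ)) ≤ Real.sqrt ((2:ℝ) ^ (-(n:ℝ) * δ)) := Real.sqrt_le_sqrt h1
      _ = ((2:ℝ) ^ (-(δ/2)) : ℝ) ^ n := by
          rw [Real.sqrt_eq_rpow, ← Real.rpow_natCast ((2:ℝ) ^ (-(δ/2))) n,
            ← Real.rpow_mul (by norm_num : (0:ℝ) ≤ 2),
            ← Real.rpow_mul (by norm_num : (0:ℝ) ≤ 2)]
          congr 1
          ring
  · -- tailB = V/δ² * (1/n)
    rw [htailBdef]
    rw [div_mul_eq_div_div]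
    rw [div_eq_mul_one_div]

end CloudMixAux
end CloudMixHelpers

/-- **Cloud-mixing (soft covering) lemma.**  Let `Q_U` be a source pmf and
`W = Q_{V|U}` a channel, with joint `Q_{UV}(u,v) = Q_U(u) W(u)(v)`.  If
`R > I(U;V)`, then the expected total variation between the output
distribution of a random codebook of `⌈2^{nR}⌉` iid `Q_U^n` codewords, mixed
uniformly through the channel, and the iid output distribution `Q_V^n`
vanishes as `n → ∞`. -/
theorem cloud_mixing
    {𝒰 𝒱 : Type} [Fintype 𝒰] [Fintype 𝒱] [DecidableEq 𝒰] [DecidableEq 𝒱]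
    [Nonempty 𝒰] [Nonempty 𝒱]
    (QU : 𝒰 → ℝ) (W : 𝒰 → 𝒱 → ℝ) (hQU : IsPmf QU) (hW : ∀ u, IsPmf (W u))
    (R : ℝ)
    (hR : mi (fun uv : 𝒰 × 𝒱 => QU uv.1 * W uv.1 uv.2) Prod.fst Prod.snd < R) :
    Tendsto (fun n : ℕ =>
        -- expectation over the random codebook `B`
        ∑ B : Fin ⌈(2 : ℝ) ^ ((n : ℝ) * R)⌉₊ → Fin n → 𝒰,
          (∏ m, ∏ k, QU (B m k)) *
            TV
              (fun v : Fin n → 𝒱 =>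
                (1 / (⌈(2 : ℝ) ^ ((n : ℝ) * R)⌉₊ : ℝ)) *
                  ∑ m, ∏ k, W (B m k) (v k))
              (fun v : Fin n → 𝒱 => ∏ k, ∑ u, QU u * W u (v k)))
      atTop (nhds 0) := by
  classical
  set I : ℝ := mi (fun uv : 𝒰 × 𝒱 => QU uv.1 * W uv.1 uv.2) Prod.fst Prod.snd with hIdef
  have hIeq : ∑ z : 𝒰 × 𝒱, (QU z.1 * W z.1 z.2) *
      (Real.logb 2 (W z.1 z.2) - Real.logb 2 (∑ u', QU u' * W u' z.2)) = I := by
    rw [hIdef]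
    calc ∑ z : 𝒰 × 𝒱, (QU z.1 * W z.1 z.2) *
        (Real.logb 2 (W z.1 z.2) - Real.logb 2 (∑ u', QU u' * W u' z.2))
        = ∑ u, ∑ v, QU u * W u v *
            (Real.logb 2 (W u v) - Real.logb 2 (∑ u', QU u' * W u' v)) :=
          Fintype.sum_prod_type _
      _ = mi (fun uv : 𝒰 × 𝒱 => QU uv.1 * W uv.1 uv.2) Prod.fst Prod.snd :=
          (CloudMixAux.mi_eq QU W hQU hW).symm
  set δ : ℝ := (R - I) / 2 with hδdef
  have hδ : 0 < δ := by rw [hδdef]; linarith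
  have hRI : I + 2 * δ = R := by rw [hδdef]; ring
  set Vq : ℝ := ∑ z : 𝒰 × 𝒱, (QU z.1 * W z.1 z.2) *
      ((Real.logb 2 (W z.1 z.2) - Real.logb 2 (∑ u', QU u' * W u' z.2)) - I) ^ 2 with hVqdef
  refine squeeze_zero'
    (g := fun n : ℕ => (1/2) * ((2:ℝ) ^ (-(δ/2)) : ℝ) ^ n + (Vq / δ ^ 2) * (1 / (n:ℝ)))
    ?_ ?_ ?_
  · refine Filter.Eventually.of_forall fun n => ?_
    refine Finset.sum_nonneg fun B _ => mul_nonneg ?_ ?_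
    · exact Finset.prod_nonneg fun m _ => Finset.prod_nonneg fun k _ => hQU.1 _
    · unfold TV
      exact div_nonneg (Finset.sum_nonneg fun v _ => abs_nonneg _) (by norm_num)
  · refine Filter.eventually_atTop.2 ⟨1, fun n hn => ?_⟩
    have hM' : (2:ℝ) ^ ((n:ℝ) * (I + 2 * δ)) ≤ ((⌈(2:ℝ) ^ ((n:ℝ) * R)⌉₊ : ℕ) : ℝ) := by
      rw [hRI]
      exact Nat.le_ceil _
    exact CloudMixAux.main_bound QU W hQU hW I δ hδ hIeq n
      ⌈(2:ℝ) ^ ((n:ℝ) * R)⌉₊ hn hM'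
  · have hr0 : (0:ℝ) ≤ (2:ℝ) ^ (-(δ/2)) := (Real.rpow_pos_of_pos two_pos _).le
    have hr1 : (2:ℝ) ^ (-(δ/2)) < 1 :=
      Real.rpow_lt_one_of_one_lt_of_neg one_lt_two (by linarith)
    have t1 : Tendsto (fun n : ℕ => ((2:ℝ) ^ (-(δ/2)) : ℝ) ^ n) atTop (nhds 0) :=
      tendsto_pow_atTop_nhds_zero_of_lt_one hr0 hr1
    have t2 : Tendsto (fun n : ℕ => 1 / (n:ℝ)) atTop (nhds 0) :=
      tendsto_one_div_atTop_nhds_zero_nat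
    have := (t1.const_mul (1/2 : ℝ)).add (t2.const_mul (Vq / δ ^ 2))
    simpa using this


end
end
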